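/- Let ζ : ℝᵖ → ℝⁿ, let Θ ⊆ ℝᵖ be closed with K = ζ(Θ) closed, and fix y ∈ ℝⁿ. Assume: (i) the metric projection of y onto K is unique with pr(y) = ζ(β̂) for some β̂ ∈ Θ; (ii) ζ is C² in a neighborhood of β̂; (iii) ζ : Θ → K is open at β̂ (for every neighborhood V of β̂ in ℝᵖ there is a neighborhood U of pr(y) in ℝⁿ with U ∩ K ⊆ ζ(V ∩ Θ)); (iv) β̂ is in the interior of Θ; and (v) the p × p matrix J given by J_{kl} = G_{kl} − Σᵢ (yᵢ − ζᵢ(β̂)) ∂ₖ∂ₗζᵢ(β̂) has full rank p, where G_{kl} = Σᵢ ∂ₖζᵢ(β̂) ∂ₗζᵢ(β̂). Then the metric projection pr is differentiable at y in the extended sense and its divergence equals ∇·pr(y) = tr(J^{−1} G). -/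

import Mathlib

open MeasureTheory Metric Asymptotics Filter
open scoped Topology

/-- The set of points whose metric projection onto `K` is unique. -/
def uniqSet (n : ℕ) (K : Set (EuclideanSpace ℝ (Fin n))) : Set (EuclideanSpace ℝ (Fin n)) :=
  {y | ∃! x, x ∈ K ∧ dist y x = infDist y K}

/-- Differentiability at `y` in the extended sense relative to `D`, with derivative `A`. -/
def DiffExtended {n : ℕ} (D : Set (EuclideanSpace ℝ (Fin n)))
    (f : EuclideanSpace ℝ (Fin n) → EuclideanSpace ℝ (Fin n))
    (y : EuclideanSpace ℝ (Fin n))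
    (A : EuclideanSpace ℝ (Fin n) →L[ℝ] EuclideanSpace ℝ (Fin n)) : Prop :=
  y ∈ D ∧ ∃ N ∈ 𝓝 y, volume (N \ D) = 0 ∧
    (fun x => f x - f y - A (x - y)) =o[𝓝[D ∩ N] y] fun x => x - y

section AuxLemmas

open ContinuousLinearMap

lemma euclid_decomp {p : ℕ} (u : EuclideanSpace ℝ (Fin p)) :
    u = ∑ l, u l • EuclideanSpace.single l (1 : ℝ) := by
  ext j
  rw [show (∑ l, u l • EuclideanSpace.single l (1 : ℝ)) j
      = ∑ l, (u l • EuclideanSpace.single l (1 : ℝ)) j from by rw [WithLp.ofLp_sum, Finset.sum_apply]]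
  simp [EuclideanSpace.single_apply]

open scoped RealInnerProductSpace in
lemma critical_point {p n : ℕ} {ζ : EuclideanSpace ℝ (Fin p) → EuclideanSpace ℝ (Fin n)}
    {β' : EuclideanSpace ℝ (Fin p)} {x : EuclideanSpace ℝ (Fin n)}
    (hdiff : DifferentiableAt ℝ ζ β')
    (hmin : ∀ᶠ β in 𝓝 β', dist x (ζ β') ≤ dist x (ζ β)) :
    ∀ v, ⟪ζ β' - x, fderiv ℝ ζ β' v⟫ = 0 := by
  intro v
  have hf : HasFDerivAt (fun β => ζ β - x) (fderiv ℝ ζ β') β' :=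
    hdiff.hasFDerivAt.sub_const x
  have hsq : HasFDerivAt (fun β => ‖ζ β - x‖ ^ 2)
      (2 • (innerSL ℝ (ζ β' - x)).comp (fderiv ℝ ζ β')) β' := hf.norm_sq
  have hlm : IsLocalMin (fun β => ‖ζ β - x‖ ^ 2) β' := by
    filter_upwards [hmin] with β hβ
    have h1 : ‖ζ β' - x‖ ≤ ‖ζ β - x‖ := by
      rw [← dist_eq_norm, ← dist_eq_norm, dist_comm (ζ β') x, dist_comm (ζ β) x] at *
      exact hβ
    have := norm_nonneg (ζ β' - x)
    simpa using pow_le_pow_left₀ this h1 2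
  have h0 := hlm.hasFDerivAt_eq_zero hsq
  have := ContinuousLinearMap.ext_iff.1 h0 v
  simp only [ContinuousLinearMap.smul_apply, ContinuousLinearMap.comp_apply,
    innerSL_apply_apply, ContinuousLinearMap.zero_apply, smul_eq_mul] at this
  have h2 : (2 : ℕ) • ⟪ζ β' - x, fderiv ℝ ζ β' v⟫ = 0 := this
  rw [nsmul_eq_mul] at h2
  push_cast at h2
  linarith

lemma nearest_stability {n : ℕ} {K : Set (EuclideanSpace ℝ (Fin n))} (hKcl : IsClosed K)
    {y z₀ : EuclideanSpace ℝ (Fin n)}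
    (hz₀K : z₀ ∈ K) (hz₀d : dist y z₀ = infDist y K)
    (huniq : ∃! x, x ∈ K ∧ dist y x = infDist y K) :
    ∀ ε > 0, ∃ δ > 0, ∀ x z, dist x y < δ → z ∈ K → dist x z = infDist x K →
      dist z z₀ < ε := by
  by_contra hcon
  push_neg at hcon
  obtain ⟨ε, hε, hbad⟩ := hcon
  choose x z hxy hzK hzd hzz using fun k : ℕ => hbad (1 / (k + 1)) (by positivity)
  have hKne : K.Nonempty := ⟨z₀, hz₀K⟩
  have hx1 : ∀ k, dist (x k) y < 1 := by
    intro k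
    refine (hxy k).trans_le ?_
    rw [div_le_one (by positivity)]
    linarith [Nat.cast_nonneg (α := ℝ) k]
  have hb : ∀ k, z k ∈ closedBall y (dist y z₀ + 2) := by
    intro k
    have h1 : dist (x k) (z k) ≤ dist (x k) z₀ := by
      rw [hzd k]; exact infDist_le_dist_of_mem hz₀K
    have h3 : dist (z k) y ≤ dist (z k) (x k) + dist (x k) y := dist_triangle _ _ _
    have h2 : dist (x k) z₀ ≤ dist (x k) y + dist y z₀ := dist_triangle _ _ _
    have h4 : dist (z k) (x k) = dist (x k) (z k) := dist_comm _ _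
    rw [mem_closedBall]
    nlinarith [hx1 k]
  obtain ⟨zl, hzl, φ, hφ, hconv⟩ :=
    tendsto_subseq_of_bounded (isBounded_closedBall (x := y) (r := dist y z₀ + 2)) hb
  have hzlK : zl ∈ K := hKcl.mem_of_tendsto hconv (Eventually.of_forall fun k => hzK _)
  have hxconv : Tendsto (fun k => x (φ k)) atTop (𝓝 y) := by
    rw [tendsto_iff_dist_tendsto_zero]
    have h0 : Tendsto (fun k : ℕ => 1 / ((k : ℝ) + 1)) atTop (𝓝 0) :=
      tendsto_one_div_add_atTop_nhds_zero_nat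
    refine squeeze_zero (fun k => dist_nonneg) (fun k => (hxy (φ k)).le.trans ?_)
      (h0.comp hφ.tendsto_atTop) |>.congr fun k => rfl
    simp
  have hdist : Tendsto (fun k => dist (x (φ k)) (z (φ k))) atTop (𝓝 (dist y zl)) :=
    (Tendsto.dist hxconv hconv)
  have hinf : Tendsto (fun k => infDist (x (φ k)) K) atTop (𝓝 (infDist y K)) :=
    ((continuous_infDist_pt K).continuousAt.tendsto.comp hxconv)
  have hdeq : dist y zl = infDist y K := by
    refine tendsto_nhds_unique (hdist.congr fun k => ?_) hinf
    exact (hzd (φ k))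
  have hzeq : zl = z₀ := by
    obtain ⟨w, hw, hwu⟩ := huniq
    rw [hwu zl ⟨hzlK, hdeq⟩, hwu z₀ ⟨hz₀K, hz₀d⟩]
  have hlim : Tendsto (fun k => dist (z (φ k)) z₀) atTop (𝓝 (dist zl z₀)) :=
    hconv.dist tendsto_const_nhds
  have hge : ε ≤ dist zl z₀ :=
    le_of_tendsto_of_tendsto' tendsto_const_nhds hlim fun k => hzz (φ k)
  rw [hzeq, dist_self] at hge
  linarith

end AuxLemmas

set_option maxHeartbeats 2000000 in
open scoped RealInnerProductSpace in
theorem divergence_formula_smooth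
    (p n : ℕ)
    (ζ : EuclideanSpace ℝ (Fin p) → EuclideanSpace ℝ (Fin n))
    (Θ : Set (EuclideanSpace ℝ (Fin p))) (hΘ : IsClosed Θ)
    (K : Set (EuclideanSpace ℝ (Fin n))) (hK : K = ζ '' Θ) (hKcl : IsClosed K)
    (y : EuclideanSpace ℝ (Fin n))
    (pr : EuclideanSpace ℝ (Fin n) → EuclideanSpace ℝ (Fin n))
    (hsel : ∀ z, pr z ∈ K ∧ dist z (pr z) = infDist z K)
    (βh : EuclideanSpace ℝ (Fin p)) (hβΘ : βh ∈ Θ)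
    -- (i) the metric projection of `y` onto `K` is unique, with `pr y = ζ β̂`
    (huniq : ∃! x, x ∈ K ∧ dist y x = infDist y K)
    (hpry : pr y = ζ βh)
    -- (ii) `ζ` is `C²` in a neighborhood of `β̂`
    (hC2 : ContDiffAt ℝ 2 ζ βh)
    -- (iii) `ζ : Θ → K` is open at `β̂`
    (hopen : ∀ V ∈ 𝓝 βh, ∃ U ∈ 𝓝 (pr y), U ∩ K ⊆ ζ '' (V ∩ Θ))
    -- (iv) `β̂` is in the interior of `Θ`
    (hint : βh ∈ interior Θ)
    -- the matrices `G` and `J`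
    (G J : Matrix (Fin p) (Fin p) ℝ)
    (hG : ∀ k l, G k l =
      ∑ i : Fin n, fderiv ℝ ζ βh (EuclideanSpace.single k 1) i *
        fderiv ℝ ζ βh (EuclideanSpace.single l 1) i)
    (hJ : ∀ k l, J k l = G k l -
      ∑ i : Fin n, (y i - ζ βh i) *
        fderiv ℝ (fun b => fderiv ℝ ζ b (EuclideanSpace.single l 1)) βh
          (EuclideanSpace.single k 1) i)
    -- (v) `J` has full rank `p`
    (hrank : J.rank = p) :
    ∃ A : EuclideanSpace ℝ (Fin n) →L[ℝ] EuclideanSpace ℝ (Fin n),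
      DiffExtended (uniqSet n K) pr y A ∧
      (∑ i : Fin n, A (EuclideanSpace.single i 1) i) = Matrix.trace (J⁻¹ * G) := by
  -- ### Derivative bookkeeping
  set L := fderiv ℝ ζ βh with hLdef
  have hDm1 : ContDiffAt ℝ 1 (fderiv ℝ ζ) βh := hC2.fderiv_right (by norm_num)
  set D2 := fderiv ℝ (fderiv ℝ ζ) βh with hD2def
  have hD2 : HasFDerivAt (fderiv ℝ ζ) D2 βh := (hDm1.differentiableAt (by norm_num)).hasFDerivAt
  have hζd : DifferentiableAt ℝ ζ βh := hC2.differentiableAt (by norm_num)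
  have hLder : HasFDerivAt ζ L βh := hζd.hasFDerivAt
  have hev : ∀ᶠ b in 𝓝 βh, HasFDerivAt ζ (fderiv ℝ ζ b) b := by
    filter_upwards [hC2.eventually (by norm_num)] with b hb
    exact (hb.differentiableAt (by norm_num)).hasFDerivAt
  have hsymm : ∀ v w, D2 v w = D2 w v := fun v w =>
    second_derivative_symmetric_of_eventually hev hD2 v w
  have hD2entry : ∀ k l : Fin p,
      fderiv ℝ (fun b => fderiv ℝ ζ b (EuclideanSpace.single l 1)) βh
        (EuclideanSpace.single k 1)
      = D2 (EuclideanSpace.single k 1) (EuclideanSpace.single l 1) := by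
    intro k l
    have h := (ContinuousLinearMap.apply ℝ (EuclideanSpace ℝ (Fin n))
        (EuclideanSpace.single l 1)).hasFDerivAt.comp βh hD2
    have h2 : (fun b => fderiv ℝ ζ b (EuclideanSpace.single l 1))
        = (⇑(ContinuousLinearMap.apply ℝ (EuclideanSpace ℝ (Fin n))
          (EuclideanSpace.single l 1)) ∘ fderiv ℝ ζ) := rfl
    rw [h2, h.fderiv]
    rfl
  have hJentry : ∀ k l : Fin p, J k l =
      ⟪ζ βh - y, D2 (EuclideanSpace.single l 1) (EuclideanSpace.single k 1)⟫
        + ⟪L (EuclideanSpace.single l 1), L (EuclideanSpace.single k 1)⟫ := by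
    intro k l
    rw [hJ k l, hG k l, hD2entry k l,
      hsymm (EuclideanSpace.single l 1) (EuclideanSpace.single k 1)]
    simp only [PiLp.inner_apply, RCLike.inner_apply, conj_trivial, PiLp.sub_apply]
    rw [← Finset.sum_sub_distrib, ← Finset.sum_add_distrib]
    exact Finset.sum_congr rfl fun i _ => by ring
  -- ### Invertibility of J
  have hdet : IsUnit J.det := by
    have hsurj : Function.Surjective J.mulVec := by
      have htop : LinearMap.range J.mulVecLin = ⊤ := by
        apply Submodule.eq_top_of_finrank_eq
        rw [show Module.finrank ℝ ↥(LinearMap.range J.mulVecLin) = J.rank from rfl, hrank,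
          Module.finrank_fintype_fun_eq_card, Fintype.card_fin]
      intro v
      obtain ⟨u, hu⟩ := LinearMap.range_eq_top.1 htop v
      exact ⟨u, hu⟩
    exact (Matrix.isUnit_iff_isUnit_det J).1 (Matrix.mulVec_surjective_iff_isUnit.1 hsurj)
  -- ### Matrices as continuous linear maps
  set Me : EuclideanSpace ℝ (Fin p) →L[ℝ] EuclideanSpace ℝ (Fin p) :=
    Matrix.toEuclideanCLM (𝕜 := ℝ) J with hMedef
  set Mi : EuclideanSpace ℝ (Fin p) →L[ℝ] EuclideanSpace ℝ (Fin p) :=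
    Matrix.toEuclideanCLM (𝕜 := ℝ) J⁻¹ with hMidef
  have hMe_apply : ∀ u k, Me u k = ∑ l, J k l * u l := by
    intro u k
    have h1 : Me u = Matrix.toEuclideanLin J u := by
      rw [hMedef, ← Matrix.coe_toEuclideanCLM_eq_toEuclideanLin]; rfl
    rw [h1, Matrix.toEuclideanLin_apply]
    simp [Matrix.mulVec, dotProduct]
  have hMi_apply : ∀ u k, Mi u k = ∑ l, J⁻¹ k l * u l := by
    intro u k
    have h1 : Mi u = Matrix.toEuclideanLin J⁻¹ u := by
      rw [hMidef, ← Matrix.coe_toEuclideanCLM_eq_toEuclideanLin]; rfl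
    rw [h1, Matrix.toEuclideanLin_apply]
    simp [Matrix.mulVec, dotProduct]
  have hMiMe : ∀ u, Mi (Me u) = u := by
    intro u
    have h1 : Mi (Me u) = (Mi * Me) u := rfl
    rw [h1, hMidef, hMedef, ← map_mul, Matrix.nonsing_inv_mul J hdet, map_one,
      ContinuousLinearMap.one_apply]
  have hMeMi : ∀ u, Me (Mi u) = u := by
    intro u
    have h1 : Me (Mi u) = (Me * Mi) u := rfl
    rw [h1, hMidef, hMedef, ← map_mul, Matrix.mul_nonsing_inv J hdet, map_one,
      ContinuousLinearMap.one_apply]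
  set Lmat : Matrix (Fin n) (Fin p) ℝ :=
    Matrix.of (fun i k => L (EuclideanSpace.single k 1) i) with hLmatdef
  set Lt : EuclideanSpace ℝ (Fin n) →L[ℝ] EuclideanSpace ℝ (Fin p) :=
    LinearMap.toContinuousLinearMap (Matrix.toEuclideanLin Lmat.transpose) with hLtdef
  have hLt_apply : ∀ (v : EuclideanSpace ℝ (Fin n)) k, Lt v k = ∑ i, Lmat i k * v i := by
    intro v k
    have h1 : Lt v = Matrix.toEuclideanLin Lmat.transpose v := rfl
    rw [h1, Matrix.toEuclideanLin_apply]
    simp [Matrix.mulVec, dotProduct, Matrix.transpose_apply]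
  -- ### The gradient map F and its derivative DF
  set DF : (EuclideanSpace ℝ (Fin p) × EuclideanSpace ℝ (Fin n)) →L[ℝ]
      EuclideanSpace ℝ (Fin p) :=
    Me ∘L ContinuousLinearMap.fst ℝ _ _ - Lt ∘L ContinuousLinearMap.snd ℝ _ _ with hDFdef
  set F : (EuclideanSpace ℝ (Fin p) × EuclideanSpace ℝ (Fin n)) → EuclideanSpace ℝ (Fin p) :=
    fun q => (WithLp.equiv 2 (Fin p → ℝ)).symm
      (fun k => ⟪ζ q.1 - q.2, fderiv ℝ ζ q.1 (EuclideanSpace.single k 1)⟫) with hFdef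
  have hFk : ∀ q k, F q k = ⟪ζ q.1 - q.2, fderiv ℝ ζ q.1 (EuclideanSpace.single k 1)⟫ :=
    fun q k => rfl
  have hFC1 : ContDiffAt ℝ 1 F (βh, y) := by
    rw [contDiffAt_euclidean]
    intro k
    have h1 : ContDiffAt ℝ 1 (fun q : EuclideanSpace ℝ (Fin p) × EuclideanSpace ℝ (Fin n) =>
        ζ q.1 - q.2) (βh, y) :=
      ((hC2.of_le (by norm_num)).comp (βh, y) contDiffAt_fst).sub contDiffAt_snd
    have h2 : ContDiffAt ℝ 1 (fun q : EuclideanSpace ℝ (Fin p) × EuclideanSpace ℝ (Fin n) =>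
        fderiv ℝ ζ q.1 (EuclideanSpace.single k 1)) (βh, y) :=
      (hDm1.comp (βh, y) contDiffAt_fst).clm_apply contDiffAt_const
    exact ContDiffAt.inner ℝ h1 h2
  have hFder : HasFDerivAt F DF (βh, y) := by
    rw [← hasFDerivWithinAt_univ, hasFDerivWithinAt_euclidean]
    intro k
    have hu : HasFDerivAt
        (fun q : EuclideanSpace ℝ (Fin p) × EuclideanSpace ℝ (Fin n) => ζ q.1 - q.2)
        (L ∘L ContinuousLinearMap.fst ℝ _ _ - ContinuousLinearMap.snd ℝ _ _) (βh, y) :=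
      (hLder.comp (βh, y) (hasFDerivAt_fst)).sub (hasFDerivAt_snd)
    have hv : HasFDerivAt
        (fun q : EuclideanSpace ℝ (Fin p) × EuclideanSpace ℝ (Fin n) =>
          fderiv ℝ ζ q.1 (EuclideanSpace.single k 1))
        (((ContinuousLinearMap.apply ℝ (EuclideanSpace ℝ (Fin n))
          (EuclideanSpace.single k 1)) ∘L D2) ∘L ContinuousLinearMap.fst ℝ _ _) (βh, y) := by
      have hv0 := ((ContinuousLinearMap.apply ℝ (EuclideanSpace ℝ (Fin n))
        (EuclideanSpace.single k 1)).hasFDerivAt.comp βh hD2).comp (βh, y)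
        (hasFDerivAt_fst (𝕜 := ℝ) (p := ((βh : EuclideanSpace ℝ (Fin p)), y)))
      simpa [Function.comp_def] using hv0
    have hk := (hu.inner ℝ hv)
    have heq : (PiLp.proj 2 (fun _ : Fin p => ℝ) k) ∘L DF
        = (fderivInnerCLM ℝ (ζ (βh, y).1 - (βh, y).2,
            fderiv ℝ ζ (βh, y).1 (EuclideanSpace.single k 1))).comp
          ((L ∘L ContinuousLinearMap.fst ℝ _ _ - ContinuousLinearMap.snd ℝ _ _).prod
            (((ContinuousLinearMap.apply ℝ (EuclideanSpace ℝ (Fin n))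
              (EuclideanSpace.single k 1)) ∘L D2) ∘L ContinuousLinearMap.fst ℝ _ _)) := by
      apply ContinuousLinearMap.ext
      intro q
      simp only [ContinuousLinearMap.comp_apply, ContinuousLinearMap.sub_apply,
        ContinuousLinearMap.prod_apply, ContinuousLinearMap.coe_fst', ContinuousLinearMap.coe_snd',
        fderivInnerCLM_apply, PiLp.proj_apply, ContinuousLinearMap.apply_apply]
      rw [← hLdef]
      have e0 : DF q k = Me q.1 k - Lt q.2 k := rfl
      rw [e0, hMe_apply, hLt_apply]
      have hδ : q.1 = ∑ l, q.1 l • EuclideanSpace.single l (1 : ℝ) := euclid_decomp _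
      have e1 : D2 q.1 (EuclideanSpace.single k 1)
          = ∑ l, q.1 l • D2 (EuclideanSpace.single l 1) (EuclideanSpace.single k 1) := by
        conv_lhs => rw [hδ]
        rw [map_sum]
        simp [ContinuousLinearMap.sum_apply]
      have e2 : L q.1 = ∑ l, q.1 l • L (EuclideanSpace.single l 1) := by
        conv_lhs => rw [hδ]
        rw [map_sum]
        simp
      rw [e1, inner_sum, inner_sub_left, e2, sum_inner]
      simp only [real_inner_smul_right, real_inner_smul_left]
      have e3 : ⟪(q.2 : EuclideanSpace ℝ (Fin n)), L (EuclideanSpace.single k 1)⟫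
          = ∑ i, Lmat i k * q.2 i := by
        rw [PiLp.inner_apply]
        simp only [RCLike.inner_apply, conj_trivial, hLmatdef, Matrix.of_apply]
      rw [e3]
      have e4 : ∀ l, J k l * q.1 l
          = q.1 l * ⟪ζ βh - y, D2 (EuclideanSpace.single l 1) (EuclideanSpace.single k 1)⟫
            + q.1 l * ⟪L (EuclideanSpace.single l 1), L (EuclideanSpace.single k 1)⟫ := by
        intro l
        rw [hJentry k l]
        ring
      rw [Finset.sum_congr rfl fun l _ => e4 l, Finset.sum_add_distrib]
      ring
    rw [heq]
    exact hk.hasFDerivWithinAt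
  -- ### First-order condition at βh
  have hζβhK : ζ βh ∈ K := hpry ▸ (hsel y).1
  have hinfy : dist y (ζ βh) = infDist y K := by
    rw [← hpry]; exact (hsel y).2
  have hF0 : F (βh, y) = 0 := by
    have hmin : ∀ᶠ β in 𝓝 βh, dist y (ζ βh) ≤ dist y (ζ β) := by
      filter_upwards [isOpen_interior.eventually_mem hint] with β hβ
      have hζβ : ζ β ∈ K := hK ▸ ⟨β, interior_subset hβ, rfl⟩
      rw [hinfy]
      exact infDist_le_dist_of_mem hζβ
    have hcrit := critical_point hζd hmin
    ext k
    rw [hFk]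
    exact hcrit _
  -- ### Inverse function theorem for T = (F, snd)
  set DTm := DF.prod (ContinuousLinearMap.snd ℝ (EuclideanSpace ℝ (Fin p))
    (EuclideanSpace ℝ (Fin n))) with hDTmdef
  set DTi := (Mi ∘L (ContinuousLinearMap.fst ℝ (EuclideanSpace ℝ (Fin p))
      (EuclideanSpace ℝ (Fin n)) + Lt ∘L ContinuousLinearMap.snd ℝ _ _)).prod
    (ContinuousLinearMap.snd ℝ _ _) with hDTidef
  have hleft : Function.LeftInverse DTi DTm := by
    intro q
    show (Mi (Me q.1 - Lt q.2 + Lt q.2), q.2) = q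
    rw [sub_add_cancel, hMiMe]
  have hright : Function.RightInverse DTi DTm := by
    intro q
    show (Me (Mi (q.1 + Lt q.2)) - Lt q.2, q.2) = q
    rw [hMeMi, add_sub_cancel_right]
  set DT := ContinuousLinearEquiv.equivOfInverse DTm DTi hleft hright with hDTdef
  set T : (EuclideanSpace ℝ (Fin p) × EuclideanSpace ℝ (Fin n)) →
      (EuclideanSpace ℝ (Fin p) × EuclideanSpace ℝ (Fin n)) :=
    fun q => (F q, q.2) with hTdef
  have hFstrict : HasStrictFDerivAt F DF (βh, y) := hFC1.hasStrictFDerivAt' hFder (by norm_num)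
  have hTder : HasStrictFDerivAt T (DT : (EuclideanSpace ℝ (Fin p) ×
      EuclideanSpace ℝ (Fin n)) →L[ℝ] (EuclideanSpace ℝ (Fin p) ×
      EuclideanSpace ℝ (Fin n))) (βh, y) := by
    have : (DT : (EuclideanSpace ℝ (Fin p) × EuclideanSpace ℝ (Fin n)) →L[ℝ]
        (EuclideanSpace ℝ (Fin p) × EuclideanSpace ℝ (Fin n))) = DTm := rfl
    rw [this, hDTmdef]
    exact hFstrict.prodMk (by
      simpa using (ContinuousLinearMap.snd ℝ (EuclideanSpace ℝ (Fin p))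
        (EuclideanSpace ℝ (Fin n))).hasStrictFDerivAt)
  set Ψ := hTder.toOpenPartialHomeomorph T with hΨdef
  have hΨcoe : ∀ q, Ψ q = T q := fun q => rfl
  have hsource : (βh, y) ∈ Ψ.source := hTder.mem_toOpenPartialHomeomorph_source
  have hT0 : T (βh, y) = (0, y) := by
    rw [hTdef]
    exact Prod.ext hF0 rfl
  -- the implicit function g
  set g : EuclideanSpace ℝ (Fin n) → EuclideanSpace ℝ (Fin p) :=
    fun x => (Ψ.symm (0, x)).1 with hgdef
  have hgy : Ψ.symm (0, y) = (βh, y) := by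
    rw [← hT0]
    exact Ψ.left_inv hsource
  have hgyval : g y = βh := by
    show (Ψ.symm (0, y)).1 = βh
    rw [hgy]
  have hsymmder : HasStrictFDerivAt Ψ.symm (DT.symm : (EuclideanSpace ℝ (Fin p) ×
      EuclideanSpace ℝ (Fin n)) →L[ℝ] (EuclideanSpace ℝ (Fin p) ×
      EuclideanSpace ℝ (Fin n))) (0, y) := by
    have h := hTder.to_localInverse
    rw [hT0] at h
    exact h
  have hDTsymm : ∀ q : EuclideanSpace ℝ (Fin p) × EuclideanSpace ℝ (Fin n),
      DT.symm q = (Mi (q.1 + Lt q.2), q.2) := fun q => rfl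
  -- derivative of g
  set Dg : EuclideanSpace ℝ (Fin n) →L[ℝ] EuclideanSpace ℝ (Fin p) :=
    (ContinuousLinearMap.fst ℝ _ _) ∘L ((DT.symm : (EuclideanSpace ℝ (Fin p) ×
      EuclideanSpace ℝ (Fin n)) →L[ℝ] (EuclideanSpace ℝ (Fin p) ×
      EuclideanSpace ℝ (Fin n))) ∘L (ContinuousLinearMap.inr ℝ _ _)) with hDgdef
  have hgder : HasFDerivAt g Dg y := by
    have hiota : HasFDerivAt (fun x : EuclideanSpace ℝ (Fin n) =>
        ((0 : EuclideanSpace ℝ (Fin p)), x))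
        (ContinuousLinearMap.inr ℝ _ _) y := by
      exact (ContinuousLinearMap.inr ℝ (EuclideanSpace ℝ (Fin p))
        (EuclideanSpace ℝ (Fin n))).hasFDerivAt (x := y)
    have h1 := (hsymmder.hasFDerivAt.comp y hiota)
    have h2 := ((ContinuousLinearMap.fst ℝ (EuclideanSpace ℝ (Fin p))
      (EuclideanSpace ℝ (Fin n))).hasFDerivAt.comp y h1)
    simpa [Function.comp_def, hgdef, hDgdef] using h2
  have hDg_apply : ∀ v, Dg v = Mi (Lt v) := by
    intro v
    have h1 : Dg v = (DT.symm ((0 : EuclideanSpace ℝ (Fin p)), v)).1 := rfl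
    rw [h1, hDTsymm]
    simp
  -- ### Choice of neighborhoods
  obtain ⟨ε₀, hε₀pos, hballsrc⟩ := Metric.isOpen_iff.1 Ψ.open_source (βh, y) hsource
  obtain ⟨r₂, hr₂pos, hballint⟩ := Metric.isOpen_iff.1 isOpen_interior βh hint
  obtain ⟨r₃, hr₃pos, hballC2⟩ := Metric.eventually_nhds_iff.1 (hC2.eventually
    (by simp : (2 : WithTop ℕ∞) ≠ (⊤ : ℕ∞)))
  set r := min ε₀ (min r₂ r₃) with hrdef
  have hrpos : 0 < r := lt_min hε₀pos (lt_min hr₂pos hr₃pos)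
  obtain ⟨U, hU, hUsub⟩ := hopen (ball βh r) (ball_mem_nhds βh hrpos)
  obtain ⟨ε, hεpos, hballU⟩ := Metric.mem_nhds_iff.1 hU
  obtain ⟨δ, hδpos, hstab⟩ := nearest_stability hKcl (hsel y).1 (hsel y).2 huniq ε hεpos
  set N := ball y (min δ ε₀) with hNdef
  have hN : N ∈ 𝓝 y := ball_mem_nhds y (lt_min hδpos hε₀pos)
  -- ### On N, every nearest point equals ζ (g x)
  have hkey : ∀ x ∈ N, ∀ z, z ∈ K → dist x z = infDist x K → z = ζ (g x) := by
    intro x hx z hzK hzd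
    have hxy : dist x y < min δ ε₀ := mem_ball.1 hx
    have hzpr : dist z (pr y) < ε := hstab x z (hxy.trans_le (min_le_left _ _)) hzK hzd
    obtain ⟨β', hβ', hζβ'⟩ := hUsub ⟨hballU (mem_ball.2 hzpr), hzK⟩
    obtain ⟨hβ'V, hβ'Θ⟩ := hβ'
    have hβ'r : dist β' βh < r := mem_ball.1 hβ'V
    have hβ'int : β' ∈ interior Θ := hballint (mem_ball.2
      (hβ'r.trans_le ((min_le_right _ _).trans (min_le_left _ _))))
    have hβ'd : DifferentiableAt ℝ ζ β' :=
      (hballC2 (hβ'r.trans_le ((min_le_right _ _).trans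
        (min_le_right _ _)))).differentiableAt (by norm_num)
    have hminx : ∀ᶠ β in 𝓝 β', dist x (ζ β') ≤ dist x (ζ β) := by
      filter_upwards [isOpen_interior.eventually_mem hβ'int] with β hβ
      have hζβ : ζ β ∈ K := hK ▸ ⟨β, interior_subset hβ, rfl⟩
      rw [hζβ', hzd]
      exact infDist_le_dist_of_mem hζβ
    have hcrit := critical_point hβ'd hminx
    have hF0' : F (β', x) = 0 := by
      ext k
      rw [hFk]
      exact hcrit _
    have hTz : T (β', x) = (0, x) := Prod.ext hF0' rfl
    have hmem : (β', x) ∈ Ψ.source := by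
      apply hballsrc
      rw [mem_ball, Prod.dist_eq]
      exact max_lt (hβ'r.trans_le (min_le_left _ _)) (hxy.trans_le (min_le_right _ _))
    have hinv : Ψ.symm (0, x) = (β', x) := by
      rw [← hTz]
      exact Ψ.left_inv hmem
    have hgx : g x = β' := by
      show (Ψ.symm (0, x)).1 = β'
      rw [hinv]
    rw [hgx, hζβ']
  have hNuniq : N ⊆ uniqSet n K := by
    intro x hx
    refine ⟨pr x, ⟨(hsel x).1, (hsel x).2⟩, ?_⟩
    intro z hz
    rw [hkey x hx z hz.1 hz.2, hkey x hx (pr x) (hsel x).1 (hsel x).2]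
  have hpr_eq : ∀ᶠ x in 𝓝 y, pr x = ζ (g x) := by
    filter_upwards [hN] with x hx
    exact hkey x hx (pr x) (hsel x).1 (hsel x).2
  -- ### derivative of the projection at y
  set A := L ∘L Dg with hAdef
  have hcomp : HasFDerivAt (fun x => ζ (g x)) A y := by
    have hL' : HasFDerivAt ζ L (g y) := by rw [hgyval]; exact hLder
    have h := hL'.comp y hgder
    simpa [Function.comp_def, hAdef] using h
  have hprder : HasFDerivAt pr A y := hcomp.congr_of_eventuallyEq hpr_eq
  refine ⟨A, ⟨huniq, N, hN, ?_, ?_⟩, ?_⟩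
  · have hempty : N \ uniqSet n K = ∅ := Set.diff_eq_empty.2 hNuniq
    rw [hempty]
    exact measure_empty
  · exact hprder.isLittleO.mono nhdsWithin_le_nhds
  -- ### the trace formula
  have hLt_single : ∀ (i : Fin n) (k : Fin p),
      Lt (EuclideanSpace.single i 1) k = Lmat i k := by
    intro i k
    rw [hLt_apply]
    rw [Finset.sum_eq_single i]
    · simp [EuclideanSpace.single_apply]
    · intro j _ hj
      simp [EuclideanSpace.single_apply, hj]
    · intro h
      exact absurd (Finset.mem_univ i) h
  have hL_apply : ∀ (u : EuclideanSpace ℝ (Fin p)) (i : Fin n),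
      L u i = ∑ l, Lmat i l * u l := by
    intro u i
    conv_lhs => rw [euclid_decomp u]
    rw [map_sum]
    rw [show (∑ l, L (u l • EuclideanSpace.single l (1 : ℝ))) i
        = ∑ l, (L (u l • EuclideanSpace.single l (1 : ℝ))) i from by rw [WithLp.ofLp_sum, Finset.sum_apply]]
    refine Finset.sum_congr rfl fun l _ => ?_
    rw [ContinuousLinearMap.map_smul]
    show u l * (L (EuclideanSpace.single l 1)) i = Lmat i l * u l
    rw [hLmatdef]
    simp [mul_comm]
  have hterm : ∀ i : Fin n, A (EuclideanSpace.single i 1) i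
      = ∑ l, ∑ k, Lmat i l * (J⁻¹ l k * Lmat i k) := by
    intro i
    have h1 : A (EuclideanSpace.single i 1) = L (Mi (Lt (EuclideanSpace.single i 1))) := by
      rw [hAdef]
      show L (Dg (EuclideanSpace.single i 1)) = _
      rw [hDg_apply]
    rw [h1, hL_apply]
    refine Finset.sum_congr rfl fun l _ => ?_
    rw [hMi_apply, Finset.mul_sum]
    refine Finset.sum_congr rfl fun k _ => ?_
    rw [hLt_single]
  rw [Finset.sum_congr rfl fun i _ => hterm i]
  have htr : Matrix.trace (J⁻¹ * G) = ∑ l, ∑ k, ∑ i, J⁻¹ l k * (Lmat i k * Lmat i l) := by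
    rw [Matrix.trace]
    refine Finset.sum_congr rfl fun l _ => ?_
    rw [Matrix.diag_apply, Matrix.mul_apply]
    refine Finset.sum_congr rfl fun k _ => ?_
    rw [hG k l, Finset.mul_sum]
    refine Finset.sum_congr rfl fun i _ => ?_
    rw [hLmatdef]
    simp only [Matrix.of_apply]
  rw [htr, Finset.sum_comm]
  refine Finset.sum_congr rfl fun l _ => ?_
  rw [Finset.sum_comm]
  refine Finset.sum_congr rfl fun k _ => ?_
  refine Finset.sum_congr rfl fun i _ => ?_
  ring
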